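/- arXiv:1907.06624 — 2 statements merged into one kernel-verified Lean document; each statement's English description precedes it below -/
import Mathlib

section
/- Madelung transform of the Koopman–van Hove equation: let H : ℝⁿ × ℝⁿ → ℝ be smooth and let R, S : ℝ × (ℝⁿ × ℝⁿ) → ℝ be smooth with R(t,z) > 0 for all (t,z). Define Ψ(t,z) := R(t,z) e^{i S(t,z)/ħ}. Then Ψ satisfies the Koopman–van Hove equation iħ ∂ₜΨ = iħ {H, Ψ} − (Σᵢ pᵢ ∂H/∂pᵢ − H) Ψ if and only if ∂ₜS + {S, H} = Σᵢ pᵢ ∂H/∂pᵢ − H and ∂ₜR + {R, H} = 0. -/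
open Complex

noncomputable section

/-- Classical phase space `T*Q = ℝⁿ × ℝⁿ` with coordinates `z = (q, p)`. -/
abbrev PS (n : ℕ) := (Fin n → ℝ) × (Fin n → ℝ)

variable {n : ℕ}

/-- Partial derivative `∂f/∂qⁱ` of a complex-valued function on phase space. -/
noncomputable def dq (i : Fin n) (f : PS n → ℂ) (z : PS n) : ℂ :=
  fderiv ℝ f z (Pi.single i 1, 0)

/-- Partial derivative `∂f/∂pᵢ` of a complex-valued function on phase space. -/
noncomputable def dp (i : Fin n) (f : PS n → ℂ) (z : PS n) : ℂ :=
  fderiv ℝ f z (0, Pi.single i 1)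

/-- Partial derivative `∂f/∂qⁱ` of a real-valued function on phase space. -/
noncomputable def dqR (i : Fin n) (f : PS n → ℝ) (z : PS n) : ℝ :=
  fderiv ℝ f z (Pi.single i 1, 0)

/-- Partial derivative `∂f/∂pᵢ` of a real-valued function on phase space. -/
noncomputable def dpR (i : Fin n) (f : PS n → ℝ) (z : PS n) : ℝ :=
  fderiv ℝ f z (0, Pi.single i 1)

/-- Canonical Poisson bracket `{F,G} = Σᵢ (∂F/∂qⁱ ∂G/∂pᵢ − ∂F/∂pᵢ ∂G/∂qⁱ)`,
extended ℂ-bilinearly to complex-valued functions. -/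
noncomputable def pb (F G : PS n → ℂ) (z : PS n) : ℂ :=
  ∑ i, (dq i F z * dp i G z - dp i F z * dq i G z)

/-- Canonical Poisson bracket of real-valued functions. -/
noncomputable def pbR (F G : PS n → ℝ) (z : PS n) : ℝ :=
  ∑ i, (dqR i F z * dpR i G z - dpR i F z * dqR i G z)

lemma ofReal_fderiv {E : Type*} [NormedAddCommGroup E] [NormedSpace ℝ E]
    (f : E → ℝ) (z : E) (hf : DifferentiableAt ℝ f z) (v : E) :
    fderiv ℝ (fun w => (f w : ℂ)) z v = (fderiv ℝ f z v : ℂ) := by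
  have h : HasFDerivAt (fun w => (f w : ℂ))
      (Complex.ofRealCLM.comp (fderiv ℝ f z)) z :=
    Complex.ofRealCLM.hasFDerivAt.comp z hf.hasFDerivAt
  rw [h.fderiv]; simp

lemma spatial_fderiv {E : Type*} [NormedAddCommGroup E] [NormedSpace ℝ E]
    (ℏ : ℝ) (f g : E → ℝ) (z : E) (hf : DifferentiableAt ℝ f z)
    (hg : DifferentiableAt ℝ g z) (v : E) :
    fderiv ℝ (fun w => (f w : ℂ) * Complex.exp (Complex.I * g w / ℏ)) z v
      = ((fderiv ℝ f z v : ℂ) + (f z : ℂ) * (Complex.I * (fderiv ℝ g z v : ℂ) / ℏ))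
          * Complex.exp (Complex.I * g z / ℏ) := by
  have h1 : HasFDerivAt (fun w => (f w : ℂ))
      (Complex.ofRealCLM.comp (fderiv ℝ f z)) z :=
    Complex.ofRealCLM.hasFDerivAt.comp z hf.hasFDerivAt
  have h2 : HasFDerivAt (fun w => (g w : ℂ))
      (Complex.ofRealCLM.comp (fderiv ℝ g z)) z :=
    Complex.ofRealCLM.hasFDerivAt.comp z hg.hasFDerivAt
  have h3 : HasFDerivAt (fun w => Complex.I * (g w : ℂ) / ℏ)
      ((Complex.I / ℏ) • (Complex.ofRealCLM.comp (fderiv ℝ g z))) z := by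
    have := h2.const_mul (Complex.I / ℏ)
    have e : (fun w => Complex.I * (g w : ℂ) / ℏ) = fun y => Complex.I / ℏ * (g y : ℂ) := by
      funext w; ring
    rw [e]; exact this
  have h4 := h3.cexp
  have h5 : HasFDerivAt (fun w => (f w : ℂ) * Complex.exp (Complex.I * g w / ℏ)) _ z := h1.mul h4
  rw [h5.fderiv]
  simp only [ContinuousLinearMap.add_apply, ContinuousLinearMap.smul_apply,
    ContinuousLinearMap.comp_apply, Complex.ofRealCLM_apply, smul_eq_mul]
  ring

lemma time_deriv (ℏ : ℝ) (f g : ℝ → ℝ) (t : ℝ) (hf : DifferentiableAt ℝ f t)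
    (hg : DifferentiableAt ℝ g t) :
    deriv (fun s => (f s : ℂ) * Complex.exp (Complex.I * g s / ℏ)) t
      = (((deriv f t : ℝ) : ℂ) + (f t : ℂ) * (Complex.I * ((deriv g t : ℝ) : ℂ) / ℏ))
          * Complex.exp (Complex.I * g t / ℏ) := by
  have h1 : HasDerivAt (fun s => (f s : ℂ)) ((deriv f t : ℝ) : ℂ) t :=
    hf.hasDerivAt.ofReal_comp
  have h2 : HasDerivAt (fun s => (g s : ℂ)) ((deriv g t : ℝ) : ℂ) t :=
    hg.hasDerivAt.ofReal_comp
  have h3 : HasDerivAt (fun s => Complex.I * (g s : ℂ) / ℏ)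
      ((Complex.I / ℏ) * ((deriv g t : ℝ) : ℂ)) t := by
    have := h2.const_mul (Complex.I / ℏ)
    have e : (fun s => Complex.I * (g s : ℂ) / ℏ) = fun y => Complex.I / ℏ * (g y : ℂ) := by
      funext w; ring
    rw [e]; exact this
  have h5 : HasDerivAt (fun s => (f s : ℂ) * Complex.exp (Complex.I * g s / ℏ)) _ t := h1.mul h3.cexp
  rw [h5.deriv]
  ring

lemma pbR_antisymm {n : ℕ} (F G : PS n → ℝ) (z : PS n) : pbR F G z = - pbR G F z := by
  unfold pbR
  rw [← Finset.sum_neg_distrib]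
  exact Finset.sum_congr rfl fun i _ => by ring

lemma pb_madelung {n : ℕ} (ℏ : ℝ) (H f g : PS n → ℝ) (z : PS n)
    (hH : DifferentiableAt ℝ H z) (hf : DifferentiableAt ℝ f z)
    (hg : DifferentiableAt ℝ g z) :
    pb (fun w => (H w : ℂ)) (fun w => (f w : ℂ) * Complex.exp (Complex.I * g w / ℏ)) z
      = ((pbR H f z : ℝ) + (f z : ℂ) * (Complex.I * ((pbR H g z : ℝ) : ℂ) / ℏ))
          * Complex.exp (Complex.I * g z / ℏ) := by
  unfold pb pbR dq dp dqR dpR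
  simp only [ofReal_fderiv H z hH, spatial_fderiv ℏ f g z hf hg]
  push_cast
  simp only [mul_sub, sub_div, Finset.sum_div, Finset.mul_sum, Finset.sum_mul, add_mul,
    sub_mul, ← Finset.sum_add_distrib, ← Finset.sum_sub_distrib]
  exact Finset.sum_congr rfl fun i _ => by ring

lemma reim_eq {a b c d : ℝ} (h : (a : ℂ) + (b : ℂ) * Complex.I = (c : ℂ) + (d : ℂ) * Complex.I) :
    a = c ∧ b = d := by
  have h1 := congrArg Complex.re h
  have h2 := congrArg Complex.im h
  simp at h1 h2
  exact ⟨h1, h2⟩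

/-- Madelung transform of the Koopman–van Hove equation:
`Ψ = R e^{iS/ℏ}` solves the KvH equation iff `∂ₜS + {S,H} = Σᵢ pᵢ ∂H/∂pᵢ − H`
and `∂ₜR + {R,H} = 0`. -/
theorem madelung_kvh (n : ℕ) (ℏ : ℝ) (hℏ : 0 < ℏ)
    (H : PS n → ℝ) (hH : ContDiff ℝ (⊤ : ℕ∞) H)
    (R S : ℝ × PS n → ℝ)
    (hR : ContDiff ℝ (⊤ : ℕ∞) R) (hS : ContDiff ℝ (⊤ : ℕ∞) S)
    (hpos : ∀ t z, 0 < R (t, z)) :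
    (∀ (t : ℝ) (z : PS n),
        Complex.I * ℏ * deriv (fun s => (R (s, z) : ℂ) * Complex.exp (Complex.I * S (s, z) / ℏ)) t
          = Complex.I * ℏ *
              pb (fun w => (H w : ℂ))
                (fun w => (R (t, w) : ℂ) * Complex.exp (Complex.I * S (t, w) / ℏ)) z
            - (((∑ i, z.2 i * dpR i H z) - H z : ℝ) : ℂ) *
                ((R (t, z) : ℂ) * Complex.exp (Complex.I * S (t, z) / ℏ)))
      ↔
    (∀ (t : ℝ) (z : PS n),
        (deriv (fun s => S (s, z)) t + pbR (fun w => S (t, w)) H z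
            = (∑ i, z.2 i * dpR i H z) - H z)
          ∧ (deriv (fun s => R (s, z)) t + pbR (fun w => R (t, w)) H z = 0)) := by
  apply forall₂_congr
  intro t z
  have hHd : DifferentiableAt ℝ H z := ((hH.differentiable (by simp)) z)
  have hRd := hR.differentiable (by simp)
  have hSd := hS.differentiable (by simp)
  have hRz : DifferentiableAt ℝ (fun s => R (s, z)) t :=
    (hRd.comp (differentiable_id.prodMk (differentiable_const z))).differentiableAt
  have hSz : DifferentiableAt ℝ (fun s => S (s, z)) t :=
    (hSd.comp (differentiable_id.prodMk (differentiable_const z))).differentiableAt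
  have hRt : DifferentiableAt ℝ (fun w => R (t, w)) z :=
    (hRd.comp ((differentiable_const t).prodMk differentiable_id)).differentiableAt
  have hSt : DifferentiableAt ℝ (fun w => S (t, w)) z :=
    (hSd.comp ((differentiable_const t).prodMk differentiable_id)).differentiableAt
  rw [time_deriv ℏ (fun s => R (s, z)) (fun s => S (s, z)) t hRz hSz,
    pb_madelung ℏ H (fun w => R (t, w)) (fun w => S (t, w)) z hHd hRt hSt]
  set r' := deriv (fun s => R (s, z)) t with hr'def
  set s' := deriv (fun s => S (s, z)) t with hs'def
  set ρ := R (t, z) with hρdef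
  set L := (∑ i, z.2 i * dpR i H z) - H z with hLdef
  set Phr := pbR H (fun w => R (t, w)) z with hPhrdef
  set Phs := pbR H (fun w => S (t, w)) z with hPhsdef
  set E := Complex.exp (Complex.I * S (t, z) / ℏ) with hEdef
  have hE : E ≠ 0 := Complex.exp_ne_zero _
  have hρ : (0 : ℝ) < ρ := hpos t z
  have hℏ' : (ℏ : ℂ) ≠ 0 := Complex.ofReal_ne_zero.2 (ne_of_gt hℏ)
  rw [pbR_antisymm (fun w => S (t, w)) H z, pbR_antisymm (fun w => R (t, w)) H z,
    ← hPhsdef, ← hPhrdef]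
  constructor
  · intro h
    have h2 : Complex.I * ℏ * ((r' : ℂ) + (ρ : ℂ) * (Complex.I * (s' : ℂ) / ℏ))
        = Complex.I * ℏ * ((Phr : ℂ) + (ρ : ℂ) * (Complex.I * (Phs : ℂ) / ℏ))
          - (L : ℂ) * ρ :=
      mul_right_cancel₀ hE (by linear_combination h)
    field_simp at h2
    have h4 : ((-(ρ * s') * ℏ : ℝ) : ℂ) + ((ℏ * r' * ℏ : ℝ) : ℂ) * Complex.I
        = (((-(ρ * Phs) - L * ρ) * ℏ : ℝ) : ℂ) + ((ℏ * Phr * ℏ : ℝ) : ℂ) * Complex.I := by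
      push_cast
      linear_combination (ℏ : ℂ) * h2 + ((ℏ : ℂ) * ρ * ((Phs : ℂ) - s')) * Complex.I_sq
    obtain ⟨ha, hb⟩ := reim_eq h4
    constructor
    · have h7 : ρ * ℏ * (s' - Phs - L) = 0 := by linear_combination -ha
      rcases mul_eq_zero.mp h7 with h8 | h8
      · exact absurd h8 (by positivity)
      · linarith
    · have h7 : ℏ * ℏ * (r' - Phr) = 0 := by linear_combination hb
      rcases mul_eq_zero.mp h7 with h8 | h8
      · exact absurd h8 (by positivity)
      · linarith
  · rintro ⟨h1, h2⟩
    have hs : s' = Phs + L := by linarith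
    have hr : r' = Phr := by linarith
    rw [hs, hr]
    have hdiv : (ρ : ℂ) * (Complex.I * (L : ℂ) / ℏ) * (Complex.I * ℏ) = -((L : ℂ) * ρ) := by
      field_simp
      linear_combination ((L : ℂ) * ρ) * Complex.I_sq
    push_cast
    linear_combination E * hdiv
end
end

section
/- For every smooth R : (ℝⁿ × ℝⁿ) × ℝᵐ → ℝ with R(z,x) > 0 everywhere, the identity (1/2) {R², (Δₓ R)/R} = Σ_{k=1}^{m} ∂_{xᵏ} {R, ∂_{xᵏ} R} holds pointwise, where the Poisson bracket {·,·} is taken in the phase-space variables z = (q,p) only and Δₓ := Σₖ ∂²_{xᵏ} is the Laplacian in the x variables. -/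
open Complex

noncomputable section

variable {n : ℕ}

/-- Hybrid quantum–classical coordinate space `Γ = ℝ²ⁿ × ℝᵈ`. -/
abbrev Hyb (n d : ℕ) := PS n × (Fin d → ℝ)

variable {d : ℕ}

/-- `∂f/∂qⁱ` on the hybrid space (real-valued). -/
noncomputable def dqH (i : Fin n) (f : Hyb n d → ℝ) (w : Hyb n d) : ℝ :=
  fderiv ℝ f w ((Pi.single i 1, 0), 0)

/-- `∂f/∂pᵢ` on the hybrid space (real-valued). -/
noncomputable def dpH (i : Fin n) (f : Hyb n d → ℝ) (w : Hyb n d) : ℝ :=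
  fderiv ℝ f w ((0, Pi.single i 1), 0)

/-- `∂f/∂xᵏ` on the hybrid space (real-valued). -/
noncomputable def dxH (k : Fin d) (f : Hyb n d → ℝ) (w : Hyb n d) : ℝ :=
  fderiv ℝ f w (0, Pi.single k 1)

/-- Canonical Poisson bracket in the phase-space variables `z = (q,p)` only,
pointwise in the quantum coordinate `x`. -/
noncomputable def pbH (F G : Hyb n d → ℝ) (w : Hyb n d) : ℝ :=
  ∑ i, (dqH i F w * dpH i G w - dpH i F w * dqH i G w)

/-- Laplacian `Δₓ` in the quantum variables `x` (real-valued). -/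
noncomputable def laplxH (f : Hyb n d → ℝ) (w : Hyb n d) : ℝ :=
  ∑ k, dxH k (fun w' => dxH k f w') w

section DDHelpers

def DD {E : Type*} [NormedAddCommGroup E] [NormedSpace ℝ E] (v : E) (f : E → ℝ) (w : E) : ℝ :=
  fderiv ℝ f w v

variable {E : Type*} [NormedAddCommGroup E] [NormedSpace ℝ E]

lemma one_le_topc : (1 : WithTop ℕ∞) ≤ ((⊤ : ℕ∞) : WithTop ℕ∞) := by
  rw [show ((1 : WithTop ℕ∞)) = ((1:ℕ∞) : WithTop ℕ∞) by rfl]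
  exact_mod_cast (le_top : (1:ℕ∞) ≤ ⊤)

lemma DD_contDiff {f : E → ℝ} (hf : ContDiff ℝ (⊤ : ℕ∞) f) (v : E) :
    ContDiff ℝ (⊤ : ℕ∞) (DD v f) :=
  (hf.fderiv_right le_rfl).clm_apply contDiff_const

lemma smooth_diff {f : E → ℝ} (hf : ContDiff ℝ (⊤ : ℕ∞) f) : Differentiable ℝ f :=
  hf.differentiable (by simp)

lemma DD_mul {f g : E → ℝ} {z : E} (hf : DifferentiableAt ℝ f z) (hg : DifferentiableAt ℝ g z)
    (v : E) : DD v (fun w => f w * g w) z = DD v f z * g z + f z * DD v g z := by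
  simp [DD, fderiv_fun_mul hf hg, mul_comm]; ring

lemma DD_inv {f : E → ℝ} {z : E} (hf : DifferentiableAt ℝ f z) (hz : f z ≠ 0) (v : E) :
    DD v (fun w => (f w)⁻¹) z = -(DD v f z) / f z ^ 2 := by
  have h := ((hasFDerivAt_inv hz).comp z hf.hasFDerivAt).fderiv
  show fderiv ℝ (fun w => (f w)⁻¹) z v = _
  rw [show (fun w => (f w)⁻¹) = (fun x : ℝ => x⁻¹) ∘ f from rfl, h]
  simp [DD, div_eq_mul_inv, mul_comm]

lemma DD_sum {ι : Type*} {s : Finset ι} {f : ι → E → ℝ} {z : E}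
    (hf : ∀ i ∈ s, DifferentiableAt ℝ (f i) z) (v : E) :
    DD v (fun w => ∑ i ∈ s, f i w) z = ∑ i ∈ s, DD v (f i) z := by
  simp [DD, fderiv_fun_sum hf]

lemma DD_sub {f g : E → ℝ} {z : E} (hf : DifferentiableAt ℝ f z) (hg : DifferentiableAt ℝ g z)
    (v : E) : DD v (fun w => f w - g w) z = DD v f z - DD v g z := by
  simp [DD, fderiv_fun_sub hf hg]

lemma DD_swap {f : E → ℝ} (hf : ContDiff ℝ (⊤ : ℕ∞) f) (u v : E) (z : E) :
    DD u (DD v f) z = DD v (DD u f) z := by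
  have hsymm : IsSymmSndFDerivAt ℝ f z := by
    apply ContDiffAt.isSymmSndFDerivAt (n := ((⊤ : ℕ∞) : WithTop ℕ∞)) hf.contDiffAt
    rw [minSmoothness_of_isRCLikeNormedField]
    rw [show ((2 : WithTop ℕ∞)) = ((2:ℕ∞) : WithTop ℕ∞) by rfl]
    exact_mod_cast (le_top : (2:ℕ∞) ≤ ⊤)
  have hd : DifferentiableAt ℝ (fderiv ℝ f) z :=
    ((hf.fderiv_right (m := ((⊤ : ℕ∞) : WithTop ℕ∞)) le_rfl).differentiable
      (by simp)).differentiableAt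
  have key : ∀ a : E, fderiv ℝ (fun w => fderiv ℝ f w a) z
      = (fderiv ℝ (fderiv ℝ f) z).flip a := by
    intro a
    have := fderiv_clm_apply (c := fderiv ℝ f) (u := fun _ : E => a) hd
      (differentiableAt_const a)
    simpa using this
  show fderiv ℝ (fun w => fderiv ℝ f w v) z u = fderiv ℝ (fun w => fderiv ℝ f w u) z v
  rw [key v, key u]
  exact hsymm u v

lemma key_identity {ι κ : Type*} [Fintype ι] [Fintype κ]
    (R : E → ℝ) (hR : ContDiff ℝ (⊤ : ℕ∞) R) (hpos : ∀ w, 0 < R w)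
    (a b : ι → E) (c : κ → E) (w : E) :
    (1/2 : ℝ) * ∑ i, (DD (a i) (fun w' => R w' ^ 2) w *
        DD (b i) (fun w' => (∑ k, DD (c k) (DD (c k) R) w') / R w') w
      - DD (b i) (fun w' => R w' ^ 2) w *
        DD (a i) (fun w' => (∑ k, DD (c k) (DD (c k) R) w') / R w') w)
    = ∑ k, DD (c k) (fun w' => ∑ i, (DD (a i) R w' * DD (b i) (DD (c k) R) w'
        - DD (b i) R w' * DD (a i) (DD (c k) R) w')) w := by
  have hRd : Differentiable ℝ R := smooth_diff hR
  have hRne : ∀ w', R w' ≠ 0 := fun w' => (hpos w').ne'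
  set Δ : E → ℝ := fun w' => ∑ k, DD (c k) (DD (c k) R) w' with hΔdef
  have hΔ : ContDiff ℝ (⊤ : ℕ∞) Δ :=
    ContDiff.sum fun k _ => DD_contDiff (DD_contDiff hR (c k)) (c k)
  have hΔd : Differentiable ℝ Δ := smooth_diff hΔ
  -- derivative of R^2
  have hsq : ∀ v : E, DD v (fun w' => R w' ^ 2) w = 2 * R w * DD v R w := by
    intro v
    rw [show (fun w' => R w' ^ 2) = fun w' => R w' * R w' from funext fun w' => sq (R w'),
      DD_mul hRd.differentiableAt hRd.differentiableAt]
    ring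
  -- derivative of Δ / R
  have hdiv : ∀ v : E, DD v (fun w' => Δ w' / R w') w
      = (DD v Δ w * R w - Δ w * DD v R w) / R w ^ 2 := by
    intro v
    rw [show (fun w' => Δ w' / R w') = fun w' => Δ w' * (R w')⁻¹ from
      funext fun w' => div_eq_mul_inv _ _,
      DD_mul (g := fun w' => (R w')⁻¹) hΔd.differentiableAt (hRd.differentiableAt.inv (hRne w)),
      DD_inv hRd.differentiableAt (hRne w)]
    field_simp [hRne w]
    ring
  -- derivative of Δ in direction v, with derivatives swapped
  have hΔv : ∀ v : E, DD v Δ w = ∑ k, DD (c k) (DD v (DD (c k) R)) w := by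
    intro v
    rw [hΔdef, DD_sum (fun k _ =>
      (smooth_diff (DD_contDiff (DD_contDiff hR (c k)) (c k))).differentiableAt) v]
    exact Finset.sum_congr rfl fun k _ => DD_swap (DD_contDiff hR (c k)) v (c k) w
  -- RHS expansion
  have hrhs : ∀ k, DD (c k) (fun w' => ∑ i, (DD (a i) R w' * DD (b i) (DD (c k) R) w'
        - DD (b i) R w' * DD (a i) (DD (c k) R) w')) w
      = ∑ i, (DD (a i) R w * DD (c k) (DD (b i) (DD (c k) R)) w
        - DD (b i) R w * DD (c k) (DD (a i) (DD (c k) R)) w) := by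
    intro k
    have hda : ∀ v : E, DifferentiableAt ℝ (DD v R) w :=
      fun v => (smooth_diff (DD_contDiff hR v)).differentiableAt
    have hdb : ∀ u v : E, DifferentiableAt ℝ (DD u (DD v R)) w :=
      fun u v => (smooth_diff (DD_contDiff (DD_contDiff hR v) u)).differentiableAt
    rw [DD_sum (f := fun i w' => DD (a i) R w' * DD (b i) (DD (c k) R) w'
        - DD (b i) R w' * DD (a i) (DD (c k) R) w') (fun i _ => ((hda (a i)).mul (hdb (b i) (c k))).sub
      ((hda (b i)).mul (hdb (a i) (c k)))) (c k)]
    refine Finset.sum_congr rfl fun i _ => ?_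
    rw [DD_sub (f := fun w' => DD (a i) R w' * DD (b i) (DD (c k) R) w')
        (g := fun w' => DD (b i) R w' * DD (a i) (DD (c k) R) w') ((hda (a i)).mul (hdb (b i) (c k))) ((hda (b i)).mul (hdb (a i) (c k))),
      DD_mul (hda (a i)) (hdb (b i) (c k)), DD_mul (hda (b i)) (hdb (a i) (c k)),
      DD_swap hR (c k) (a i) w, DD_swap hR (c k) (b i) w]
    ring
  calc (1/2 : ℝ) * ∑ i, (DD (a i) (fun w' => R w' ^ 2) w * DD (b i) (fun w' => Δ w' / R w') w
        - DD (b i) (fun w' => R w' ^ 2) w * DD (a i) (fun w' => Δ w' / R w') w)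
      = ∑ i, ∑ k, (DD (a i) R w * DD (c k) (DD (b i) (DD (c k) R)) w
        - DD (b i) R w * DD (c k) (DD (a i) (DD (c k) R)) w) := by
        rw [Finset.mul_sum]
        refine Finset.sum_congr rfl fun i _ => ?_
        rw [hsq, hsq, hdiv, hdiv, hΔv, hΔv, Finset.sum_sub_distrib,
          ← Finset.mul_sum, ← Finset.mul_sum]
        field_simp [hRne w]
        ring
    _ = ∑ k, ∑ i, (DD (a i) R w * DD (c k) (DD (b i) (DD (c k) R)) w
        - DD (b i) R w * DD (c k) (DD (a i) (DD (c k) R)) w) := Finset.sum_comm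
    _ = _ := Finset.sum_congr rfl fun k _ => (hrhs k).symm

end DDHelpers

/-- For positive smooth `R` on the hybrid space,
`(1/2) {R², (ΔₓR)/R} = Σₖ ∂_{xᵏ} {R, ∂_{xᵏ}R}` pointwise. -/
theorem half_bracket_laplacian_identity (n d : ℕ)
    (R : Hyb n d → ℝ) (hR : ContDiff ℝ (⊤ : ℕ∞) R) (hpos : ∀ w, 0 < R w) :
    ∀ w : Hyb n d,
      (1 / 2) * pbH (fun w' => R w' ^ 2) (fun w' => laplxH R w' / R w') w
        = ∑ k, dxH k (fun w' => pbH R (fun w'' => dxH k R w'') w') w := by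
  intro w
  exact key_identity R hR hpos
    (fun i => ((Pi.single i 1, 0), 0))
    (fun i => ((0, Pi.single i 1), 0))
    (fun k => ((0 : PS n), Pi.single k 1)) w
end
end
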